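/- arXiv:1901.08782 — 4 statements merged into one kernel-verified Lean document; each statement's English description precedes it below -/
import Mathlib

section
/- Let Qₛ be an M×M and Qᵣ a Kₜ×Kₜ complex Hermitian positive semidefinite matrix, H₁ a Kᵣ×M complex matrix and H̄ᵣ a Kᵣ×Kₜ complex matrix. Then det(I + H₁ Qₛ H₁ᴴ + H̄ᵣ Qᵣ H̄ᵣᴴ) / det(I + H̄ᵣ Qᵣ H̄ᵣᴴ) = det(I + H₁ Qₛ H₁ᴴ − H₁ Qₛ H₁ᴴ H̄ᵣ (I + Qᵣ H̄ᵣᴴ H̄ᵣ)⁻¹ Qᵣ H̄ᵣᴴ), where all determinants involved are nonzero (the denominator determinant is that of a positive definite matrix). -/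
open Matrix ComplexOrder

/-- Quotient-to-difference form of the full-duplex source–relay rate:
`det(I + H₁QₛH₁ᴴ + H̄ᵣQᵣH̄ᵣᴴ) / det(I + H̄ᵣQᵣH̄ᵣᴴ)
  = det(I + H₁QₛH₁ᴴ − H₁QₛH₁ᴴH̄ᵣ(I + QᵣH̄ᵣᴴH̄ᵣ)⁻¹QᵣH̄ᵣᴴ)`,
with nonzero denominator determinant. -/
theorem stmt_4 (M Kt Kr : ℕ)
    (Qs : Matrix (Fin M) (Fin M) ℂ) (hQs : Qs.PosSemidef)
    (Qr : Matrix (Fin Kt) (Fin Kt) ℂ) (hQr : Qr.PosSemidef)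
    (H1 : Matrix (Fin Kr) (Fin M) ℂ) (Hr : Matrix (Fin Kr) (Fin Kt) ℂ) :
    (1 + Hr * Qr * Hrᴴ).det ≠ 0 ∧
    (1 + H1 * Qs * H1ᴴ + Hr * Qr * Hrᴴ).det / (1 + Hr * Qr * Hrᴴ).det =
      (1 + H1 * Qs * H1ᴴ -
        H1 * Qs * H1ᴴ * Hr * (1 + Qr * Hrᴴ * Hr)⁻¹ * Qr * Hrᴴ).det := by
  set A := H1 * Qs * H1ᴴ with hA
  set B := Hr * Qr * Hrᴴ with hB
  set C := 1 + Qr * Hrᴴ * Hr with hC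
  have hBpsd : B.PosSemidef := hQr.mul_mul_conjTranspose_same Hr
  have hIB : (1 + B).PosDef := Matrix.PosDef.add_posSemidef Matrix.PosDef.one hBpsd
  have hdet : (1 + B).det ≠ 0 := hIB.det_pos.ne'
  refine ⟨hdet, ?_⟩
  -- C is invertible
  have hdetC : C.det ≠ 0 := by
    have h : C.det = (1 + B).det := by
      rw [hC, Matrix.det_one_add_mul_comm, hB, ← Matrix.mul_assoc]
    rw [h]; exact hdet
  have hCC : C * C⁻¹ = 1 := Matrix.mul_nonsing_inv _ hdetC.isUnit
  have hmid : C⁻¹ * Qr + Qr * Hrᴴ * Hr * (C⁻¹ * Qr) = Qr := by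
    have h : C * (C⁻¹ * Qr) = Qr := by rw [← Matrix.mul_assoc, hCC, Matrix.one_mul]
    rw [hC, Matrix.add_mul, Matrix.one_mul] at h
    exact h
  -- push-through identity for the inverse of 1 + B
  have hx : Hr * C⁻¹ * Qr * Hrᴴ + B * (Hr * C⁻¹ * Qr * Hrᴴ) = B := by
    have h : Hr * C⁻¹ * Qr * Hrᴴ + Hr * Qr * Hrᴴ * (Hr * C⁻¹ * Qr * Hrᴴ)
        = Hr * (C⁻¹ * Qr + Qr * Hrᴴ * Hr * (C⁻¹ * Qr)) * Hrᴴ := by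
      simp only [Matrix.mul_add, Matrix.add_mul, Matrix.mul_assoc]
    rw [hB, h, hmid]
  have hinv : (1 + B) * (1 - Hr * C⁻¹ * Qr * Hrᴴ) = 1 := by
    have expand : (1 + B) * (1 - Hr * C⁻¹ * Qr * Hrᴴ)
        = 1 + B - (Hr * C⁻¹ * Qr * Hrᴴ + B * (Hr * C⁻¹ * Qr * Hrᴴ)) := by
      noncomm_ring
    rw [expand, hx]
    abel
  have hIBinv : (1 + B)⁻¹ = 1 - Hr * C⁻¹ * Qr * Hrᴴ := Matrix.inv_eq_right_inv hinv
  have key : (1 + A + B) = (1 + A * (1 + B)⁻¹) * (1 + B) := by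
    rw [hIBinv]
    have h2 : (1 - Hr * C⁻¹ * Qr * Hrᴴ) * (1 + B) = 1 := by
      calc (1 - Hr * C⁻¹ * Qr * Hrᴴ) * (1 + B)
          = (1 + B)⁻¹ * (1 + B) := by rw [hIBinv]
        _ = 1 := Matrix.nonsing_inv_mul _ hdet.isUnit
    have expand : (1 + A * (1 - Hr * C⁻¹ * Qr * Hrᴴ)) * (1 + B)
        = 1 + A + B + (A * ((1 - Hr * C⁻¹ * Qr * Hrᴴ) * (1 + B)) - A) := by
      noncomm_ring
    rw [expand, h2]
    simp
  rw [key, Matrix.det_mul, mul_div_assoc, div_self hdet, mul_one, hIBinv]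
  congr 1
  rw [Matrix.mul_sub, Matrix.mul_one, add_sub_assoc]
  simp only [Matrix.mul_assoc]
end

section
/- Let n ∈ ℕ, let L, R₁, R₂ be n×n complex unitary matrices, and let Σ₁, Γₛ, Γᵣ, Σᵣ be n×n real diagonal matrices with nonnegative diagonal entries σ₁ᵢ, γ_{s,i}, γ_{r,i}, σ_{r,i}. Define H₁ = L Σ₁ R₁ᴴ, Qₛ = R₁ Γₛ R₁ᴴ, Qᵣ = R₂ Γᵣ R₂ᴴ, and the aligned RSI channel H̄ᵣ = L Σᵣ R₂ᴴ. Then det(I + H₁ Qₛ H₁ᴴ + H̄ᵣ Qᵣ H̄ᵣᴴ) / det(I + H̄ᵣ Qᵣ H̄ᵣᴴ) = ∏ᵢ (1 + σ₁ᵢ² γ_{s,i} / (1 + γ_{r,i} σ_{r,i}²)); equivalently, the source-relay rate R^FD_sr = log₂ of the left-hand side equals Σᵢ log₂(1 + σ₁ᵢ² γ_{s,i} / (1 + γ_{r,i} σ_{r,i}²)). -/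
open Matrix

/-- Closed-form source–relay rate for the aligned worst-case RSI channel:
with `H₁ = LΣ₁R₁ᴴ`, `Qₛ = R₁ΓₛR₁ᴴ`, `Qᵣ = R₂ΓᵣR₂ᴴ` and `H̄ᵣ = LΣᵣR₂ᴴ`,
`det(I + H₁QₛH₁ᴴ + H̄ᵣQᵣH̄ᵣᴴ)/det(I + H̄ᵣQᵣH̄ᵣᴴ) = ∏ᵢ(1 + σ₁ᵢ²γₛᵢ/(1 + γᵣᵢσᵣᵢ²))`,
and equivalently the rate `log₂` of the left-hand side equals
`Σᵢ log₂(1 + σ₁ᵢ²γₛᵢ/(1 + γᵣᵢσᵣᵢ²))`. -/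
theorem stmt_8 (n : ℕ) (L R1 R2 : Matrix (Fin n) (Fin n) ℂ)
    (hL : Lᴴ * L = 1) (hR1 : R1ᴴ * R1 = 1) (hR2 : R2ᴴ * R2 = 1)
    (σ1 γs γr σr : Fin n → ℝ)
    (hσ1 : ∀ i, 0 ≤ σ1 i) (hγs : ∀ i, 0 ≤ γs i)
    (hγr : ∀ i, 0 ≤ γr i) (hσr : ∀ i, 0 ≤ σr i)
    (H1 Qs Qr Hr : Matrix (Fin n) (Fin n) ℂ)
    (hH1 : H1 = L * (Matrix.diagonal fun i => (σ1 i : ℂ)) * R1ᴴ)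
    (hQs : Qs = R1 * (Matrix.diagonal fun i => (γs i : ℂ)) * R1ᴴ)
    (hQr : Qr = R2 * (Matrix.diagonal fun i => (γr i : ℂ)) * R2ᴴ)
    (hHr : Hr = L * (Matrix.diagonal fun i => (σr i : ℂ)) * R2ᴴ) :
    (1 + H1 * Qs * H1ᴴ + Hr * Qr * Hrᴴ).det / (1 + Hr * Qr * Hrᴴ).det =
      ((∏ i, (1 + (σ1 i) ^ 2 * γs i / (1 + γr i * (σr i) ^ 2)) : ℝ) : ℂ) ∧
    Real.logb 2
        (((1 + H1 * Qs * H1ᴴ + Hr * Qr * Hrᴴ).det / (1 + Hr * Qr * Hrᴴ).det).re) =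
      ∑ i, Real.logb 2 (1 + (σ1 i) ^ 2 * γs i / (1 + γr i * (σr i) ^ 2)) := by
  have hpos : ∀ i, (0:ℝ) < 1 + γr i * (σr i) ^ 2 := fun i => by
    have := mul_nonneg (hγr i) (sq_nonneg (σr i)); linarith
  -- diagonal matrices with real entries are self-adjoint
  have hdiagH : ∀ (d : Fin n → ℝ),
      (Matrix.diagonal fun i => (d i : ℂ))ᴴ = Matrix.diagonal fun i => (d i : ℂ) := by
    intro d
    rw [Matrix.diagonal_conjTranspose,
      show (star fun i => ((d i : ℂ))) = (fun i => (d i : ℂ)) from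
        funext fun i => Complex.conj_ofReal (d i)]
  have hLL : L * Lᴴ = 1 := mul_eq_one_comm.mp hL
  have cR1 : ∀ A : Matrix (Fin n) (Fin n) ℂ, R1ᴴ * (R1 * A) = A := by
    intro A; rw [← Matrix.mul_assoc, hR1, one_mul]
  have cR2 : ∀ A : Matrix (Fin n) (Fin n) ℂ, R2ᴴ * (R2 * A) = A := by
    intro A; rw [← Matrix.mul_assoc, hR2, one_mul]
  -- sandwich computations
  have sandwich : ∀ (a b : Fin n → ℝ),
      (L * (Matrix.diagonal fun i => (a i : ℂ)) * R1ᴴ) *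
        (R1 * (Matrix.diagonal fun i => (b i : ℂ)) * R1ᴴ) *
        (L * (Matrix.diagonal fun i => (a i : ℂ)) * R1ᴴ)ᴴ =
      L * ((Matrix.diagonal fun i => ((a i ^ 2 * b i : ℝ) : ℂ)) * Lᴴ) := by
    intro a b
    rw [Matrix.conjTranspose_mul, Matrix.conjTranspose_mul, hdiagH,
      Matrix.conjTranspose_conjTranspose]
    simp only [Matrix.mul_assoc, cR1]
    congr 1
    rw [← Matrix.mul_assoc (Matrix.diagonal fun i => ((b i : ℂ))),
      Matrix.diagonal_mul_diagonal, ← Matrix.mul_assoc, Matrix.diagonal_mul_diagonal]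
    congr 1
    congr 1
    funext i
    push_cast
    ring
  have sandwich2 : ∀ (a b : Fin n → ℝ),
      (L * (Matrix.diagonal fun i => (a i : ℂ)) * R2ᴴ) *
        (R2 * (Matrix.diagonal fun i => (b i : ℂ)) * R2ᴴ) *
        (L * (Matrix.diagonal fun i => (a i : ℂ)) * R2ᴴ)ᴴ =
      L * ((Matrix.diagonal fun i => ((a i ^ 2 * b i : ℝ) : ℂ)) * Lᴴ) := by
    intro a b
    rw [Matrix.conjTranspose_mul, Matrix.conjTranspose_mul, hdiagH,
      Matrix.conjTranspose_conjTranspose]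
    simp only [Matrix.mul_assoc, cR2]
    congr 1
    rw [← Matrix.mul_assoc (Matrix.diagonal fun i => ((b i : ℂ))),
      Matrix.diagonal_mul_diagonal, ← Matrix.mul_assoc, Matrix.diagonal_mul_diagonal]
    congr 1
    congr 1
    funext i
    push_cast
    ring
  -- determinant of L * (D * Lᴴ)
  have detSand : ∀ (d : Fin n → ℂ),
      (L * (Matrix.diagonal d * Lᴴ)).det = ∏ i, d i := by
    intro d
    rw [Matrix.det_mul, Matrix.det_mul]
    have h1 : L.det * Lᴴ.det = 1 := by
      rw [← Matrix.det_mul, hLL, Matrix.det_one]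
    calc L.det * ((Matrix.diagonal d).det * Lᴴ.det)
        = (Matrix.diagonal d).det * (L.det * Lᴴ.det) := by ring
      _ = ∏ i, d i := by rw [h1, mul_one, Matrix.det_diagonal]
  have hone : (1 : Matrix (Fin n) (Fin n) ℂ) =
      L * (Matrix.diagonal (fun _ : Fin n => ((1:ℝ):ℂ)) * Lᴴ) := by
    rw [show Matrix.diagonal (fun _ : Fin n => ((1:ℝ):ℂ)) = 1 by
      rw [show (fun _ : Fin n => ((1:ℝ):ℂ)) = fun _ => (1:ℂ) by push_cast; rfl,
        Matrix.diagonal_one], one_mul, hLL]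
  -- the two matrices as sandwiches
  have hM1 : 1 + H1 * Qs * H1ᴴ + Hr * Qr * Hrᴴ =
      L * ((Matrix.diagonal fun i =>
        ((1 + (σ1 i) ^ 2 * γs i + γr i * (σr i) ^ 2 : ℝ) : ℂ)) * Lᴴ) := by
    rw [hH1, hQs, hQr, hHr, sandwich σ1 γs, sandwich2 σr γr, hone,
      ← Matrix.mul_add, ← Matrix.mul_add, ← Matrix.add_mul, ← Matrix.add_mul,
      Matrix.diagonal_add, Matrix.diagonal_add]
    congr 2
    ext i j
    rcases eq_or_ne i j with h | h
    · subst h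
      simp only [Matrix.diagonal_apply_eq]
      push_cast
      ring
    · simp only [Matrix.diagonal_apply_ne _ h]
  have hM2 : 1 + Hr * Qr * Hrᴴ =
      L * ((Matrix.diagonal fun i => ((1 + γr i * (σr i) ^ 2 : ℝ) : ℂ)) * Lᴴ) := by
    rw [hQr, hHr, sandwich2 σr γr, hone, ← Matrix.mul_add, ← Matrix.add_mul,
      Matrix.diagonal_add]
    congr 2
    ext i j
    rcases eq_or_ne i j with h | h
    · subst h
      simp only [Matrix.diagonal_apply_eq]
      push_cast
      ring
    · simp only [Matrix.diagonal_apply_ne _ h]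
  have hdetA : (1 + H1 * Qs * H1ᴴ + Hr * Qr * Hrᴴ).det =
      ∏ i, ((1 + (σ1 i) ^ 2 * γs i + γr i * (σr i) ^ 2 : ℝ) : ℂ) := by
    rw [hM1, detSand]
  have hdetB : (1 + Hr * Qr * Hrᴴ).det = ∏ i, ((1 + γr i * (σr i) ^ 2 : ℝ) : ℂ) := by
    rw [hM2, detSand]
  -- the real-valued ratio identity
  have hratio : (∏ i, (1 + (σ1 i) ^ 2 * γs i + γr i * (σr i) ^ 2)) /
      (∏ i, (1 + γr i * (σr i) ^ 2)) =
      ∏ i, (1 + (σ1 i) ^ 2 * γs i / (1 + γr i * (σr i) ^ 2)) := by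
    rw [← Finset.prod_div_distrib]
    refine Finset.prod_congr rfl fun i _ => ?_
    have hb : (1 + γr i * (σr i) ^ 2) ≠ 0 := (hpos i).ne'
    field_simp
    ring
  have hmain : (1 + H1 * Qs * H1ᴴ + Hr * Qr * Hrᴴ).det / (1 + Hr * Qr * Hrᴴ).det =
      ((∏ i, (1 + (σ1 i) ^ 2 * γs i / (1 + γr i * (σr i) ^ 2)) : ℝ) : ℂ) := by
    rw [hdetA, hdetB, ← Complex.ofReal_prod, ← Complex.ofReal_prod,
      ← Complex.ofReal_div, hratio]
  refine ⟨hmain, ?_⟩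
  rw [hmain, Complex.ofReal_re]
  rw [Real.logb, Real.log_prod (fun i _ => by
    have h1 := hpos i
    have h2 : (0:ℝ) ≤ (σ1 i) ^ 2 * γs i / (1 + γr i * (σr i) ^ 2) :=
      div_nonneg (mul_nonneg (sq_nonneg _) (hγs i)) h1.le
    nlinarith)]
  rw [Finset.sum_div]
  rfl
end

section
/- Let n ≥ 1, T > 0, and c, d : Fin n → ℝ with cᵢ > 0 and dᵢ > 0 for all i. Consider f(x) = Σᵢ log₂(1 + cᵢ/(1 + dᵢ xᵢ)) on the compact set S = {x : Fin n → ℝ | xᵢ ≥ 0 for all i and Σᵢ xᵢ ≤ T}. Then f attains its minimum on S, and every minimizer x* satisfies Σᵢ x*ᵢ = T. -/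
/-- The inner minimization of the robust design is attained and uses the full
uncertainty budget: on `S = {x | x ≥ 0, Σᵢ xᵢ ≤ T}`, the function
`f(x) = Σᵢ log₂(1 + cᵢ/(1 + dᵢxᵢ))` attains its minimum, and every minimizer `x*`
satisfies `Σᵢ x*ᵢ = T`. -/
theorem stmt_12 (n : ℕ) (hn : 1 ≤ n) (T : ℝ) (hT : 0 < T) (c d : Fin n → ℝ)
    (hc : ∀ i, 0 < c i) (hd : ∀ i, 0 < d i)
    (S : Set (Fin n → ℝ)) (hS : S = {x | (∀ i, 0 ≤ x i) ∧ ∑ i, x i ≤ T})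
    (f : (Fin n → ℝ) → ℝ)
    (hf : f = fun x => ∑ i, Real.logb 2 (1 + c i / (1 + d i * x i))) :
    (∃ x ∈ S, ∀ y ∈ S, f x ≤ f y) ∧
    (∀ x ∈ S, (∀ y ∈ S, f x ≤ f y) → ∑ i, x i = T) := by
  subst hS hf
  set S : Set (Fin n → ℝ) := {x | (∀ i, 0 ≤ x i) ∧ ∑ i, x i ≤ T} with hSdef
  have hpos : ∀ x ∈ S, ∀ i : Fin n, 0 < 1 + d i * x i := by
    intro x hx i
    have := mul_nonneg (hd i).le (hx.1 i)
    linarith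
  constructor
  · -- existence of minimizer
    have hclosed : IsClosed S := by
      have h1 : IsClosed {x : Fin n → ℝ | ∀ i, 0 ≤ x i} := by
        have : {x : Fin n → ℝ | ∀ i, 0 ≤ x i} = ⋂ i, {x | 0 ≤ x i} := by
          ext x; simp
        rw [this]
        exact isClosed_iInter fun i => isClosed_le continuous_const (continuous_apply i)
      have h2 : IsClosed {x : Fin n → ℝ | ∑ i, x i ≤ T} :=
        isClosed_le (by continuity) continuous_const
      exact h1.inter h2
    have hsub : S ⊆ Set.Icc (fun _ => 0) (fun _ => T) := by
      intro x hx
      constructor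
      · intro i; exact hx.1 i
      · intro i
        calc x i ≤ ∑ j, x j := Finset.single_le_sum (fun j _ => hx.1 j) (Finset.mem_univ i)
          _ ≤ T := hx.2
    have hcpt : IsCompact S := (isCompact_Icc).of_isClosed_subset hclosed hsub
    have hne : S.Nonempty := ⟨fun _ => 0, fun i => le_refl 0, by simp [hT.le]⟩
    have hcont : ContinuousOn (fun x : Fin n → ℝ =>
        ∑ i, Real.logb 2 (1 + c i / (1 + d i * x i))) S := by
      apply continuousOn_finset_sum
      intro i _
      intro x hx
      apply ContinuousAt.continuousWithinAt
      have hden : (0:ℝ) < 1 + d i * x i := hpos x hx i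
      have harg : (0:ℝ) < 1 + c i / (1 + d i * x i) := by
        have := div_pos (hc i) hden
        linarith
      have hinner : ContinuousAt (fun y : Fin n → ℝ => 1 + c i / (1 + d i * y i)) x := by
        apply ContinuousAt.add continuousAt_const
        apply ContinuousAt.div continuousAt_const
        · exact ContinuousAt.add continuousAt_const
            (ContinuousAt.mul continuousAt_const (continuous_apply i).continuousAt)
        · exact hden.ne'
      exact ContinuousAt.comp (g := Real.logb 2)
        (f := fun y : Fin n → ℝ => 1 + c i / (1 + d i * y i)) (Real.continuousAt_logb harg.ne') hinner
    obtain ⟨x, hxS, hmin⟩ := hcpt.exists_isMinOn hne hcont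
    exact ⟨x, hxS, fun y hy => hmin hy⟩
  · -- every minimizer uses the full budget
    intro x hxS hmin
    by_contra hne
    have hlt : ∑ i, x i < T := lt_of_le_of_ne hxS.2 hne
    set ε := T - ∑ i, x i with hε
    have hεpos : 0 < ε := by simp [hε]; linarith
    obtain ⟨i0⟩ : Nonempty (Fin n) := ⟨⟨0, hn⟩⟩
    set y := Function.update x i0 (x i0 + ε) with hy
    have hyS : y ∈ S := by
      constructor
      · intro i
        by_cases h : i = i0
        · subst h; simp [hy]; have := hxS.1 i; linarith
        · simp [hy, Function.update_of_ne h]; exact hxS.1 i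
      · have : ∑ i, y i = ∑ i, x i + ε := by
          rw [hy, Finset.sum_update_of_mem (Finset.mem_univ i0)]
          rw [Finset.sum_eq_sum_sdiff_singleton_add (Finset.mem_univ i0) x]
          ring
        rw [this]; simp [hε]
    have hflt : (∑ i, Real.logb 2 (1 + c i / (1 + d i * y i)))
        < ∑ i, Real.logb 2 (1 + c i / (1 + d i * x i)) := by
      apply Finset.sum_lt_sum
      · intro i _
        by_cases h : i = i0
        · subst h
          have hdx : (0:ℝ) < 1 + d i * x i := hpos x hxS i
          have hdy : (0:ℝ) < 1 + d i * y i := hpos y hyS i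
          have hle : 1 + d i * x i ≤ 1 + d i * y i := by
            simp [hy]
            nlinarith [hd i]
          have : c i / (1 + d i * y i) ≤ c i / (1 + d i * x i) :=
            div_le_div_of_nonneg_left (hc i).le hdx hle
          have harg' : (0:ℝ) < 1 + c i / (1 + d i * y i) := by
            have := div_pos (hc i) hdy; linarith
          exact Real.logb_le_logb_of_le (by norm_num) harg' (by linarith)
        · simp [hy, Function.update_of_ne h]
      · refine ⟨i0, Finset.mem_univ i0, ?_⟩
        have hdx : (0:ℝ) < 1 + d i0 * x i0 := hpos x hxS i0
        have hdy : (0:ℝ) < 1 + d i0 * y i0 := hpos y hyS i0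
        have hlt' : 1 + d i0 * x i0 < 1 + d i0 * y i0 := by
          simp [hy]
          nlinarith [hd i0]
        have hdiv : c i0 / (1 + d i0 * y i0) < c i0 / (1 + d i0 * x i0) :=
          div_lt_div_of_pos_left (hc i0) hdx hlt'
        have harg : (0:ℝ) < 1 + c i0 / (1 + d i0 * y i0) := by
          have := div_pos (hc i0) hdy; linarith
        apply Real.logb_lt_logb (by norm_num)
        · exact harg
        · linarith
    have := hmin y hyS
    simp only at this
    linarith
end

section
/- Let n ∈ ℕ, T ≥ 0, let L, R₁, R₂ be n×n complex unitary matrices, let Σ₁, Γₛ, Γᵣ be n×n real diagonal matrices with nonnegative diagonal entries σ₁ᵢ, γ_{s,i}, γ_{r,i}, and set H₁ = L Σ₁ R₁ᴴ, Qₛ = R₁ Γₛ R₁ᴴ, Qᵣ = R₂ Γᵣ R₂ᴴ. Then the infimum over all n×n complex matrices H̄ᵣ with Tr(H̄ᵣ H̄ᵣᴴ) ≤ T of the source-relay rate R^FD_sr(H̄ᵣ) = log₂(det(I + H₁ Qₛ H₁ᴴ + H̄ᵣ Qᵣ H̄ᵣᴴ)/det(I + H̄ᵣ Qᵣ H̄ᵣᴴ))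 is at most the infimum, over all σ : Fin n → ℝ with σᵢ ≥ 0 and Σᵢ σᵢ² ≤ T, of Σᵢ log₂(1 + σ₁ᵢ² γ_{s,i}/(1 + γ_{r,i} σᵢ²)). -/
open Matrix

/-- Achievability direction of Proposition 1: the worst-case source–relay rate over
all RSI channels with `Tr(H̄ᵣH̄ᵣᴴ) ≤ T` is at most the optimal value of the scalar
program over singular values `σ` with `Σᵢ σᵢ² ≤ T`. -/
theorem stmt_14 (n : ℕ) (T : ℝ) (hT : 0 ≤ T)
    (L R1 R2 : Matrix (Fin n) (Fin n) ℂ)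
    (hL : Lᴴ * L = 1) (hR1 : R1ᴴ * R1 = 1) (hR2 : R2ᴴ * R2 = 1)
    (σ1 γs γr : Fin n → ℝ)
    (hσ1 : ∀ i, 0 ≤ σ1 i) (hγs : ∀ i, 0 ≤ γs i) (hγr : ∀ i, 0 ≤ γr i)
    (H1 Qs Qr : Matrix (Fin n) (Fin n) ℂ)
    (hH1 : H1 = L * (Matrix.diagonal fun i => (σ1 i : ℂ)) * R1ᴴ)
    (hQs : Qs = R1 * (Matrix.diagonal fun i => (γs i : ℂ)) * R1ᴴ)
    (hQr : Qr = R2 * (Matrix.diagonal fun i => (γr i : ℂ)) * R2ᴴ) :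
    sInf {y : ℝ | ∃ Hr : Matrix (Fin n) (Fin n) ℂ,
        (Matrix.trace (Hr * Hrᴴ)).re ≤ T ∧
        y = Real.logb 2
          (((1 + H1 * Qs * H1ᴴ + Hr * Qr * Hrᴴ).det /
            (1 + Hr * Qr * Hrᴴ).det).re)} ≤
    sInf {y : ℝ | ∃ σ : Fin n → ℝ, (∀ i, 0 ≤ σ i) ∧ (∑ i, (σ i) ^ 2) ≤ T ∧
        y = ∑ i, Real.logb 2 (1 + (σ1 i) ^ 2 * γs i / (1 + γr i * (σ i) ^ 2))} := by
  have hLL : L * Lᴴ = 1 := mul_eq_one_comm.mp hL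
  have hcR1 : ∀ X : Matrix (Fin n) (Fin n) ℂ, R1ᴴ * (R1 * X) = X := fun X => by
    rw [← Matrix.mul_assoc, hR1, one_mul]
  have hcR2 : ∀ X : Matrix (Fin n) (Fin n) ℂ, R2ᴴ * (R2 * X) = X := fun X => by
    rw [← Matrix.mul_assoc, hR2, one_mul]
  have hd : ∀ (u v : Fin n → ℂ) (X : Matrix (Fin n) (Fin n) ℂ),
      Matrix.diagonal u * (Matrix.diagonal v * X) = Matrix.diagonal (u * v) * X := by
    intro u v X
    rw [← Matrix.mul_assoc, Matrix.diagonal_mul_diagonal]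
    rfl
  -- membership of scalar program values in the matrix program set
  have hsub : {y : ℝ | ∃ σ : Fin n → ℝ, (∀ i, 0 ≤ σ i) ∧ (∑ i, (σ i) ^ 2) ≤ T ∧
        y = ∑ i, Real.logb 2 (1 + (σ1 i) ^ 2 * γs i / (1 + γr i * (σ i) ^ 2))} ⊆
      {y : ℝ | ∃ Hr : Matrix (Fin n) (Fin n) ℂ,
        (Matrix.trace (Hr * Hrᴴ)).re ≤ T ∧
        y = Real.logb 2
          (((1 + H1 * Qs * H1ᴴ + Hr * Qr * Hrᴴ).det /
            (1 + Hr * Qr * Hrᴴ).det).re)} := by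
    rintro y ⟨σ, hσ0, hσT, rfl⟩
    refine ⟨L * Matrix.diagonal (fun i => (σ i : ℂ)) * R2ᴴ, ?_, ?_⟩
    · -- trace bound
      have e1 : ((fun i => ((σ i : ℝ) : ℂ)) * star fun i => ((σ i : ℝ) : ℂ)) =
          fun i => (((σ i) ^ 2 : ℝ) : ℂ) := by
        funext i
        simp [Pi.mul_apply, Pi.star_apply, Complex.conj_ofReal]
        push_cast
        ring
      have hHH : (L * Matrix.diagonal (fun i => (σ i : ℂ)) * R2ᴴ) *
          (L * Matrix.diagonal (fun i => (σ i : ℂ)) * R2ᴴ)ᴴ =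
          L * (Matrix.diagonal (fun i => (((σ i) ^ 2 : ℝ) : ℂ)) * Lᴴ) := by
        simp only [Matrix.conjTranspose_mul, Matrix.conjTranspose_conjTranspose,
          Matrix.diagonal_conjTranspose, Matrix.mul_assoc, hcR2, hd, e1]
      rw [hHH, Matrix.trace_mul_comm, Matrix.mul_assoc, hL, Matrix.mul_one,
        Matrix.trace_diagonal]
      calc (∑ i, (((σ i) ^ 2 : ℝ) : ℂ)).re = ∑ i, (σ i) ^ 2 := by
            rw [← Complex.ofReal_sum]; exact Complex.ofReal_re _
        _ ≤ T := hσT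
    · -- rate value
      have eA : (((fun i => ((σ1 i : ℝ) : ℂ)) * fun i => ((γs i : ℝ) : ℂ)) *
            star fun i => ((σ1 i : ℝ) : ℂ)) =
          fun i => (((σ1 i) ^ 2 * γs i : ℝ) : ℂ) := by
        funext i
        simp [Pi.mul_apply, Pi.star_apply, Complex.conj_ofReal]
        push_cast
        ring
      have eB : (((fun i => ((σ i : ℝ) : ℂ)) * fun i => ((γr i : ℝ) : ℂ)) *
            star fun i => ((σ i : ℝ) : ℂ)) =
          fun i => ((γr i * (σ i) ^ 2 : ℝ) : ℂ) := by
        funext i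
        simp [Pi.mul_apply, Pi.star_apply, Complex.conj_ofReal]
        push_cast
        ring
      have hA : H1 * Qs * H1ᴴ =
          L * (Matrix.diagonal (fun i => (((σ1 i) ^ 2 * γs i : ℝ) : ℂ)) * Lᴴ) := by
        subst hH1 hQs
        simp only [Matrix.conjTranspose_mul, Matrix.conjTranspose_conjTranspose,
          Matrix.diagonal_conjTranspose, Matrix.mul_assoc, hcR1, hd, eA]
      have hB : (L * Matrix.diagonal (fun i => (σ i : ℂ)) * R2ᴴ) * Qr *
          (L * Matrix.diagonal (fun i => (σ i : ℂ)) * R2ᴴ)ᴴ =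
          L * (Matrix.diagonal (fun i => ((γr i * (σ i) ^ 2 : ℝ) : ℂ)) * Lᴴ) := by
        subst hQr
        simp only [Matrix.conjTranspose_mul, Matrix.conjTranspose_conjTranspose,
          Matrix.diagonal_conjTranspose, Matrix.mul_assoc, hcR2, hd, eB]
      have hdetL : L.det * Lᴴ.det = 1 := by
        rw [← Matrix.det_mul, hLL, Matrix.det_one]
      have hdetsand : ∀ v : Fin n → ℂ,
          (1 + L * (Matrix.diagonal v * Lᴴ)).det = ∏ i, (1 + v i) := by
        intro v
        have h1 : (1 : Matrix (Fin n) (Fin n) ℂ) + L * (Matrix.diagonal v * Lᴴ) =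
            L * (Matrix.diagonal (fun i => 1 + v i) * Lᴴ) := by
          have hdd : Matrix.diagonal (fun i : Fin n => (1 : ℂ) + v i) =
              1 + Matrix.diagonal v := by
            rw [← Matrix.diagonal_one, ← Matrix.diagonal_add]
          rw [hdd, Matrix.add_mul, Matrix.mul_add, Matrix.one_mul, ← Matrix.mul_assoc, hLL]
        rw [h1, ← Matrix.mul_assoc, Matrix.det_mul, Matrix.det_mul,
          Matrix.det_diagonal]
        calc L.det * (∏ i, (1 + v i)) * Lᴴ.det
            = (L.det * Lᴴ.det) * ∏ i, (1 + v i) := by ring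
          _ = ∏ i, (1 + v i) := by rw [hdetL, one_mul]
      have hden : (1 + (L * Matrix.diagonal (fun i => (σ i : ℂ)) * R2ᴴ) * Qr *
          (L * Matrix.diagonal (fun i => (σ i : ℂ)) * R2ᴴ)ᴴ).det =
          ((∏ i, (1 + γr i * (σ i) ^ 2) : ℝ) : ℂ) := by
        rw [hB, hdetsand, Complex.ofReal_prod]
        refine Finset.prod_congr rfl fun i _ => ?_
        push_cast
        ring
      have hnum : (1 + H1 * Qs * H1ᴴ + (L * Matrix.diagonal (fun i => (σ i : ℂ)) * R2ᴴ) * Qr *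
          (L * Matrix.diagonal (fun i => (σ i : ℂ)) * R2ᴴ)ᴴ).det =
          ((∏ i, (1 + ((σ1 i) ^ 2 * γs i + γr i * (σ i) ^ 2)) : ℝ) : ℂ) := by
        rw [hA, hB, add_assoc, ← Matrix.mul_add, ← Matrix.add_mul, Matrix.diagonal_add,
          hdetsand, Complex.ofReal_prod]
        refine Finset.prod_congr rfl fun i _ => ?_
        push_cast
        ring
      rw [hnum, hden, ← Complex.ofReal_div, Complex.ofReal_re]
      have hbpos : ∀ i : Fin n, (0:ℝ) < 1 + γr i * (σ i) ^ 2 := by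
        intro i; have := hγr i; positivity
      have hapos : ∀ i : Fin n, (0:ℝ) < 1 + ((σ1 i) ^ 2 * γs i + γr i * (σ i) ^ 2) := by
        intro i
        have := hγs i; have := hσ1 i; have := hγr i
        positivity
      rw [← Finset.prod_div_distrib, Real.logb_prod]
      · refine Finset.sum_congr rfl fun i _ => ?_
        congr 1
        have hbne : (1 + γr i * (σ i) ^ 2) ≠ 0 := ne_of_gt (hbpos i)
        field_simp
        ring
      · intro i _
        exact ne_of_gt (div_pos (hapos i) (hbpos i))
  have hBne : ({y : ℝ | ∃ σ : Fin n → ℝ, (∀ i, 0 ≤ σ i) ∧ (∑ i, (σ i) ^ 2) ≤ T ∧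
        y = ∑ i, Real.logb 2 (1 + (σ1 i) ^ 2 * γs i / (1 + γr i * (σ i) ^ 2))}).Nonempty := by
    refine ⟨_, fun i => 0, fun i => le_refl 0, by simpa using hT, rfl⟩
  by_cases hbdd : BddBelow {y : ℝ | ∃ Hr : Matrix (Fin n) (Fin n) ℂ,
        (Matrix.trace (Hr * Hrᴴ)).re ≤ T ∧
        y = Real.logb 2
          (((1 + H1 * Qs * H1ᴴ + Hr * Qr * Hrᴴ).det /
            (1 + Hr * Qr * Hrᴴ).det).re)}
  · exact csInf_le_csInf hbdd hBne hsub
  · rw [Real.sInf_of_not_bddBelow hbdd]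
    refine le_csInf hBne ?_
    rintro y ⟨σ, hσ0, hσT, rfl⟩
    refine Finset.sum_nonneg fun i _ => ?_
    refine Real.logb_nonneg one_lt_two ?_
    have h1 := hγr i
    have hb : (0:ℝ) < 1 + γr i * (σ i) ^ 2 := by positivity
    have : 0 ≤ (σ1 i) ^ 2 * γs i / (1 + γr i * (σ i) ^ 2) := by
      have := hγs i
      positivity
    linarith
end
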